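/- Define μ̃(s, q) = q·(2λ_p(s)^{1/2}φ(λ_p(s)^{1/2}) + 2Φ̄(λ_p(s)^{1/2})) and σ̃(s, q) = √( q·(2(λ_p(s)^{3/2} + 3λ_p(s)^{1/2})φ(λ_p(s)^{1/2}) + 6Φ̄(λ_p(s)^{1/2})) ), with λ_p(s) = 4s log p and p ≥ 2, q ≥ 1 fixed. Then both s ↦ μ̃(s, q) and s ↦ σ̃(s, q) are strictly monotone decreasing on (0, 1). -/

import Mathlib

open Real

/-- Standard normal density. -/
noncomputable def stdNormalPDF (x : ℝ) : ℝ :=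
  (Real.sqrt (2 * Real.pi))⁻¹ * Real.exp (-x^2 / 2)

/-- Standard normal survival function `Φ̄`. -/
noncomputable def stdNormalSurvival (x : ℝ) : ℝ :=
  ∫ t in Set.Ioi x, stdNormalPDF t

/-- Threshold level `λ_p(s) = 4 s log p`. -/
noncomputable def lamP (p : ℕ) (s : ℝ) : ℝ := 4 * s * Real.log p

/-- Main-order null mean `μ̃(s, q)` of the thresholding statistic. -/
noncomputable def muTilde (p : ℕ) (q s : ℝ) : ℝ :=
  q * (2 * Real.sqrt (lamP p s) * stdNormalPDF (Real.sqrt (lamP p s))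
        + 2 * stdNormalSurvival (Real.sqrt (lamP p s)))

/-- Main-order null standard deviation `σ̃(s, q)` of the thresholding statistic. -/
noncomputable def sigmaTilde (p : ℕ) (q s : ℝ) : ℝ :=
  Real.sqrt (q * (2 * ((lamP p s) ^ ((3:ℝ)/2) + 3 * Real.sqrt (lamP p s))
      * stdNormalPDF (Real.sqrt (lamP p s))
      + 6 * stdNormalSurvival (Real.sqrt (lamP p s))))

lemma stdNormalPDF_pos (x : ℝ) : 0 < stdNormalPDF x := by
  unfold stdNormalPDF
  positivity

lemma continuous_stdNormalPDF : Continuous stdNormalPDF := by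
  unfold stdNormalPDF
  fun_prop

lemma integrable_stdNormalPDF : MeasureTheory.Integrable stdNormalPDF := by
  have h : MeasureTheory.Integrable (fun x : ℝ => Real.exp (-(1/2) * x ^ 2)) :=
    integrable_exp_neg_mul_sq (by norm_num)
  have := h.const_mul (Real.sqrt (2 * Real.pi))⁻¹
  refine this.congr ?_
  filter_upwards with x
  unfold stdNormalPDF
  ring_nf

lemma stdNormalSurvival_eq (x : ℝ) :
    stdNormalSurvival x = stdNormalSurvival 0 - ∫ t in (0:ℝ)..x, stdNormalPDF t := by
  have h := intervalIntegral.integral_Iic_sub_Iic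
    (f := stdNormalPDF) (μ := MeasureTheory.volume) (a := (0:ℝ)) (b := x)
    integrable_stdNormalPDF.integrableOn integrable_stdNormalPDF.integrableOn
  have h0 : (∫ t in Set.Iic (0:ℝ), stdNormalPDF t) + stdNormalSurvival 0
      = ∫ t, stdNormalPDF t :=
    intervalIntegral.integral_Iic_add_Ioi integrable_stdNormalPDF.integrableOn
      integrable_stdNormalPDF.integrableOn
  have hx : (∫ t in Set.Iic x, stdNormalPDF t) + stdNormalSurvival x
      = ∫ t, stdNormalPDF t :=
    intervalIntegral.integral_Iic_add_Ioi integrable_stdNormalPDF.integrableOn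
      integrable_stdNormalPDF.integrableOn
  linarith [h]

lemma survival_hasDerivAt (x : ℝ) :
    HasDerivAt stdNormalSurvival (-(stdNormalPDF x)) x := by
  have h : HasDerivAt (fun u => ∫ t in (0:ℝ)..u, stdNormalPDF t) (stdNormalPDF x) x :=
    intervalIntegral.integral_hasDerivAt_right
      integrable_stdNormalPDF.intervalIntegrable
      continuous_stdNormalPDF.aestronglyMeasurable.stronglyMeasurableAtFilter
      continuous_stdNormalPDF.continuousAt
  have := (hasDerivAt_const x (stdNormalSurvival 0)).sub h
  refine HasDerivAt.congr_of_eventuallyEq (by simpa using this) ?_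
  filter_upwards with u
  exact stdNormalSurvival_eq u

lemma pdf_hasDerivAt (x : ℝ) :
    HasDerivAt stdNormalPDF (-x * stdNormalPDF x) x := by
  have h1 : HasDerivAt (fun x : ℝ => -x^2 / 2) (-x) x := by
    have := ((hasDerivAt_pow 2 x).neg).div_const 2
    simpa using this.congr_deriv (by ring)
  have h2 := (h1.exp).const_mul (Real.sqrt (2 * Real.pi))⁻¹
  unfold stdNormalPDF
  refine h2.congr_deriv ?_
  ring

noncomputable def gFun (x : ℝ) : ℝ := 2 * x * stdNormalPDF x + 2 * stdNormalSurvival x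

noncomputable def hFun (x : ℝ) : ℝ :=
  2 * (x ^ 3 + 3 * x) * stdNormalPDF x + 6 * stdNormalSurvival x

lemma gFun_hasDerivAt (x : ℝ) :
    HasDerivAt gFun (-2 * x ^ 2 * stdNormalPDF x) x := by
  have h1 : HasDerivAt (fun x : ℝ => 2 * x) 2 x := by
    simpa using (hasDerivAt_id x).const_mul 2
  have h := (h1.mul (pdf_hasDerivAt x)).add ((survival_hasDerivAt x).const_mul 2)
  refine h.congr_deriv ?_
  ring

lemma hFun_hasDerivAt (x : ℝ) :
    HasDerivAt hFun (-2 * x ^ 4 * stdNormalPDF x) x := by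
  have h1 : HasDerivAt (fun x : ℝ => 2 * (x ^ 3 + 3 * x)) (2 * (3 * x ^ 2 + 3)) x := by
    have := ((hasDerivAt_pow 3 x).add ((hasDerivAt_id x).const_mul 3)).const_mul 2
    refine this.congr_deriv ?_
    push_cast
    ring
  have h := (h1.mul (pdf_hasDerivAt x)).add ((survival_hasDerivAt x).const_mul 6)
  refine h.congr_deriv ?_
  ring

lemma gFun_anti : StrictAntiOn gFun (Set.Ioi (0:ℝ)) := by
  refine strictAntiOn_of_deriv_neg (convex_Ioi 0) ?_ ?_
  · intro x _
    exact (gFun_hasDerivAt x).continuousAt.continuousWithinAt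
  · intro x hx
    rw [interior_Ioi] at hx
    rw [(gFun_hasDerivAt x).deriv]
    have hx' : (0:ℝ) < x := hx
    nlinarith [mul_pos (pow_pos hx' 2) (stdNormalPDF_pos x)]

lemma hFun_anti : StrictAntiOn hFun (Set.Ioi (0:ℝ)) := by
  refine strictAntiOn_of_deriv_neg (convex_Ioi 0) ?_ ?_
  · intro x _
    exact (hFun_hasDerivAt x).continuousAt.continuousWithinAt
  · intro x hx
    rw [interior_Ioi] at hx
    rw [(hFun_hasDerivAt x).deriv]
    have hx' : (0:ℝ) < x := hx
    nlinarith [mul_pos (pow_pos hx' 4) (stdNormalPDF_pos x)]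

lemma survival_nonneg (x : ℝ) : 0 ≤ stdNormalSurvival x :=
  MeasureTheory.integral_nonneg fun t => (stdNormalPDF_pos t).le

lemma hFun_nonneg {x : ℝ} (hx : 0 ≤ x) : 0 ≤ hFun x := by
  unfold hFun
  have := stdNormalPDF_pos x
  have := survival_nonneg x
  positivity

theorem stmt_8 (p : ℕ) (hp : 2 ≤ p) (q : ℝ) (hq : 1 ≤ q) :
    StrictAntiOn (fun s => muTilde p q s) (Set.Ioo (0 : ℝ) 1) ∧
    StrictAntiOn (fun s => sigmaTilde p q s) (Set.Ioo (0 : ℝ) 1) := by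
  have hlogp : 0 < Real.log p := by
    apply Real.log_pos
    exact_mod_cast Nat.lt_of_lt_of_le one_lt_two hp
  have hq0 : (0:ℝ) < q := lt_of_lt_of_le one_pos hq
  -- key facts for s ∈ Ioo 0 1
  have hlam : ∀ s ∈ Set.Ioo (0:ℝ) 1, 0 < lamP p s := by
    intro s hs
    unfold lamP
    have := hs.1
    positivity
  have hsqrt_mono : ∀ s₁ ∈ Set.Ioo (0:ℝ) 1, ∀ s₂ ∈ Set.Ioo (0:ℝ) 1, s₁ < s₂ →
      Real.sqrt (lamP p s₁) < Real.sqrt (lamP p s₂) := by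
    intro s₁ hs₁ s₂ hs₂ h12
    apply Real.sqrt_lt_sqrt (hlam s₁ hs₁).le
    unfold lamP
    nlinarith
  have hx_pos : ∀ s ∈ Set.Ioo (0:ℝ) 1, 0 < Real.sqrt (lamP p s) := fun s hs =>
    Real.sqrt_pos.mpr (hlam s hs)
  have hmu : ∀ s, muTilde p q s = q * gFun (Real.sqrt (lamP p s)) := fun s => rfl
  have hsig : ∀ s ∈ Set.Ioo (0:ℝ) 1,
      sigmaTilde p q s = Real.sqrt (q * hFun (Real.sqrt (lamP p s))) := by
    intro s hs
    have h := (hlam s hs).le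
    have key : (lamP p s) ^ ((3:ℝ)/2) = Real.sqrt (lamP p s) ^ 3 := by
      have h2 : lamP p s = Real.sqrt (lamP p s) ^ 2 := (Real.sq_sqrt h).symm
      conv_lhs => rw [h2]
      rw [← Real.rpow_natCast (Real.sqrt (lamP p s)) 2,
        ← Real.rpow_mul (Real.sqrt_nonneg _),
        ← Real.rpow_natCast (Real.sqrt (lamP p s)) 3]
      norm_num
    unfold sigmaTilde hFun
    rw [key]
  constructor
  · intro s₁ hs₁ s₂ hs₂ h12
    simp only [hmu]
    have := gFun_anti (hx_pos s₁ hs₁) (hx_pos s₂ hs₂) (hsqrt_mono s₁ hs₁ s₂ hs₂ h12)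
    nlinarith
  · intro s₁ hs₁ s₂ hs₂ h12
    simp only [hsig s₁ hs₁, hsig s₂ hs₂]
    apply Real.sqrt_lt_sqrt
    · exact mul_nonneg hq0.le (hFun_nonneg (hx_pos s₂ hs₂).le)
    · have := hFun_anti (hx_pos s₁ hs₁) (hx_pos s₂ hs₂) (hsqrt_mono s₁ hs₁ s₂ hs₂ h12)
      nlinarith
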